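/- Let n ≥ 1, let L be a finite set, let ρ be a permutation of [n] ∪ L, and let 0 ≤ i ≤ j ≤ n be such that for every k ∈ {i, i+1, …, j} one has ρ(k) ∈ L and ρ(ρ(k)) = k. Then all the corresponding faces agree in the set of Symm(L)-conjugacy orbits: the classes of D_i(ρ), D_{i+1}(ρ), …, D_j(ρ) in Tymm([n−1] ∪ L) all coincide. (This is the key step showing that all faces taken along a fan of a parametrized unenumerated Sullivan diagram coincide.) -/

import Mathlib

/-- `Option α ⊕ β ≃ Option (α ⊕ β)`, sending `inl none` to `none`. -/
def optionSumEquiv (α β : Type*) : (Option α ⊕ β) ≃ Option (α ⊕ β) where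
  toFun x :=
    match x with
    | Sum.inl (some a) => some (Sum.inl a)
    | Sum.inl none => none
    | Sum.inr b => some (Sum.inr b)
  invFun x :=
    match x with
    | some (Sum.inl a) => Sum.inl (some a)
    | some (Sum.inr b) => Sum.inr b
    | none => Sum.inl none
  left_inv x := by rcases x with (_ | a) | b <;> rfl
  right_inv x := by rcases x with _ | (a | b) <;> rfl

/-- The identification of `[n] ∪ L` with `Option ([n-1] ∪ L)` sending `i` to `none`:
away from `i` it is the order-preserving renormalization `[n] \ {i} → [n-1]`
(the inverse of `d_i`, i.e. the map `s_i` restricted to `[n] \ {i}`), and the identity on `L`. -/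
def faceEquiv (n : ℕ) (L : Type*) (i : Fin (n + 1)) :
    (Fin (n + 1) ⊕ L) ≃ Option (Fin n ⊕ L) :=
  ((finSuccEquiv' i).sumCongr (Equiv.refl L)).trans (optionSumEquiv (Fin n) L)

/-- The `i`-th face map `D_i : Symm([n] ∪ L) → Symm([n-1] ∪ L)`, given by
`D_i(α) = s_i ∘ α ∘ (i α⁻¹(i)) ∘ d_i`, i.e. removing the symbol `i` from the cycle
decomposition of `α` and renormalizing the remaining elements of `[n]`. -/
def faceMap {n : ℕ} {L : Type*} (i : Fin (n + 1)) (α : Equiv.Perm (Fin (n + 1) ⊕ L)) :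
    Equiv.Perm (Fin n ⊕ L) :=
  Equiv.removeNone (((faceEquiv n L i).symm.trans α).trans (faceEquiv n L i))


/-- The extension of a permutation `σ` of `L` to a permutation of `[n] ∪ L`
(here `Fin n ⊕ L`) which is the identity on `[n]`. -/
def extendPerm (n : ℕ) {L : Type*} (σ : Equiv.Perm L) : Equiv.Perm (Fin n ⊕ L) :=
  Equiv.sumCongr (Equiv.refl (Fin n)) σ

section aux

variable {n : ℕ} {L : Type*}

lemma succAbove_val (i : Fin (n + 1)) (m : Fin n) :
    (i.succAbove m).val = if m.val < i.val then m.val else m.val + 1 := by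
  rcases lt_or_ge (m.val) (i.val) with h | h
  · rw [Fin.succAbove_of_castSucc_lt _ _ (by simpa [Fin.lt_def] using h)]
    simp [h]
  · rw [Fin.succAbove_of_le_castSucc _ _ (by simpa [Fin.le_def] using h)]
    simp [Nat.not_lt.mpr h]

lemma fe_symm_none (i : Fin (n + 1)) : (faceEquiv n L i).symm none = Sum.inl i := by
  simp [faceEquiv, optionSumEquiv]

lemma fe_symm_some_inl (i : Fin (n + 1)) (m : Fin n) :
    (faceEquiv n L i).symm (some (Sum.inl m)) = Sum.inl (i.succAbove m) := by
  simp [faceEquiv, optionSumEquiv, finSuccEquiv'_symm_some]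

lemma fe_symm_some_inr (i : Fin (n + 1)) (t : L) :
    (faceEquiv n L i).symm (some (Sum.inr t)) = Sum.inr t := by
  simp [faceEquiv, optionSumEquiv]

lemma fe_inl_self (i : Fin (n + 1)) : faceEquiv n L i (Sum.inl i) = none := by
  simp [faceEquiv, optionSumEquiv, finSuccEquiv'_at]

lemma fe_inr (i : Fin (n + 1)) (t : L) :
    faceEquiv n L i (Sum.inr t) = some (Sum.inr t) := by
  simp [faceEquiv, optionSumEquiv]

lemma fe_inl_succAbove (i : Fin (n + 1)) (m : Fin n) :
    faceEquiv n L i (Sum.inl (i.succAbove m)) = some (Sum.inl m) := by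
  rw [← fe_symm_some_inl i m, Equiv.apply_symm_apply]

lemma fe_inl_of_succAbove (i : Fin (n + 1)) (m : Fin n) {M : Fin (n + 1)}
    (h : i.succAbove m = M) : faceEquiv n L i (Sum.inl M) = some (Sum.inl m) := by
  subst h; exact fe_inl_succAbove i m

lemma faceMap_apply_some (i : Fin (n + 1)) (ρ : Equiv.Perm (Fin (n + 1) ⊕ L))
    {x y : Fin n ⊕ L}
    (h : faceEquiv n L i (ρ ((faceEquiv n L i).symm (some x))) = some y) :
    faceMap i ρ x = y := by
  have h' : (((faceEquiv n L i).symm.trans ρ).trans (faceEquiv n L i)) (some x) = some y := h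
  have := Equiv.removeNone_some (((faceEquiv n L i).symm.trans ρ).trans (faceEquiv n L i))
    ⟨y, h'⟩
  rw [h'] at this
  exact Option.some_injective _ this

lemma faceMap_apply_none (i : Fin (n + 1)) (ρ : Equiv.Perm (Fin (n + 1) ⊕ L))
    {x y : Fin n ⊕ L}
    (h : faceEquiv n L i (ρ ((faceEquiv n L i).symm (some x))) = none)
    (h2 : faceEquiv n L i (ρ (Sum.inl i)) = some y) :
    faceMap i ρ x = y := by
  have h' : (((faceEquiv n L i).symm.trans ρ).trans (faceEquiv n L i)) (some x) = none := h
  have := Equiv.removeNone_none (((faceEquiv n L i).symm.trans ρ).trans (faceEquiv n L i)) h'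
  have h3 : (((faceEquiv n L i).symm.trans ρ).trans (faceEquiv n L i)) none = some y := by
    simpa [fe_symm_none] using h2
  rw [h3] at this
  exact Option.some_injective _ this


lemma faceMap_apply_some' (i : Fin (n + 1)) (ρ : Equiv.Perm (Fin (n + 1) ⊕ L))
    {x y : Fin n ⊕ L} {w v : Fin (n + 1) ⊕ L}
    (hw : (faceEquiv n L i).symm (some x) = w) (hρ : ρ w = v)
    (hv : faceEquiv n L i v = some y) : faceMap i ρ x = y := by
  subst hw; subst hρ
  exact faceMap_apply_some i ρ hv

lemma faceMap_apply_none' (i : Fin (n + 1)) (ρ : Equiv.Perm (Fin (n + 1) ⊕ L))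
    {x y : Fin n ⊕ L} {w v u : Fin (n + 1) ⊕ L}
    (hw : (faceEquiv n L i).symm (some x) = w) (hρ : ρ w = v)
    (hv : faceEquiv n L i v = none) (hρi : ρ (Sum.inl i) = u)
    (hu : faceEquiv n L i u = some y) : faceMap i ρ x = y := by
  subst hw; subst hρ; subst hρi
  exact faceMap_apply_none i ρ hv hu

lemma extendPerm_one : extendPerm n (1 : Equiv.Perm L) = 1 := by
  ext x; rcases x with m | t <;> rfl

lemma extendPerm_mul (σ τ : Equiv.Perm L) :
    extendPerm n (σ * τ) = extendPerm n σ * extendPerm n τ := by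
  ext x
  rcases x with m | t <;> rfl

end aux

lemma mk_succAbove_val {N : ℕ} (p : Fin (N + 1)) (v : ℕ) (hv : v < N) :
    (p.succAbove ⟨v, hv⟩).val = if v < p.val then v else v + 1 :=
  succAbove_val p ⟨v, hv⟩

section step

variable {n : ℕ} {L : Type*}

lemma step [DecidableEq L] (ρ : Equiv.Perm (Fin (n + 2) ⊕ L)) (k : ℕ) (hk : k + 1 ≤ n + 1)
    (l l' : L)
    (h1 : ρ (Sum.inl (⟨k, by omega⟩ : Fin (n + 2))) = Sum.inr l)
    (h2 : ρ (Sum.inr l) = Sum.inl (⟨k, by omega⟩ : Fin (n + 2)))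
    (h3 : ρ (Sum.inl (⟨k + 1, by omega⟩ : Fin (n + 2))) = Sum.inr l')
    (h4 : ρ (Sum.inr l') = Sum.inl (⟨k + 1, by omega⟩ : Fin (n + 2))) :
    faceMap (⟨k + 1, by omega⟩ : Fin (n + 2)) ρ =
      (extendPerm (n + 1) (Equiv.swap l l'))⁻¹ *
        faceMap (⟨k, by omega⟩ : Fin (n + 2)) ρ * extendPerm (n + 1) (Equiv.swap l l') := by
  set K : Fin (n + 2) := ⟨k, by omega⟩ with hK
  set K' : Fin (n + 2) := ⟨k + 1, by omega⟩ with hK'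
  have hKval : K.val = k := rfl
  have hK'val : K'.val = k + 1 := rfl
  have hll' : l ≠ l' := by
    intro h
    rw [h] at h2
    rw [h2] at h4
    exact absurd (congrArg Fin.val (Sum.inl.inj h4)) (by simp [hKval, hK'val])
  have hKA : K'.succAbove (⟨k, by omega⟩ : Fin (n + 1)) = K := by
    apply Fin.ext
    rw [mk_succAbove_val, hK'val, hKval]
    split_ifs <;> omega
  have hKA' : K.succAbove (⟨k, by omega⟩ : Fin (n + 1)) = K' := by
    apply Fin.ext
    rw [mk_succAbove_val, hKval, hK'val]
    split_ifs <;> omega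
  ext x
  have hmul : ∀ z : Fin (n + 1) ⊕ L,
      ((extendPerm (n + 1) (Equiv.swap l l'))⁻¹ *
        faceMap K ρ * extendPerm (n + 1) (Equiv.swap l l')) z =
      (extendPerm (n + 1) (Equiv.swap l l'))⁻¹
        (faceMap K ρ (extendPerm (n + 1) (Equiv.swap l l') z)) := fun z => rfl
  rw [hmul]
  have hinv : (extendPerm (n + 1) (Equiv.swap l l'))⁻¹ = extendPerm (n + 1) (Equiv.swap l l') := by
    ext z
    rcases z with m | t
    · rfl
    · simp [extendPerm]
  rw [hinv]
  have glue : ∀ (x x' A B : Fin (n + 1) ⊕ L),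
      faceMap K' ρ x = A →
      extendPerm (n + 1) (Equiv.swap l l') x = x' →
      faceMap K ρ x' = B →
      extendPerm (n + 1) (Equiv.swap l l') B = A →
      faceMap K' ρ x =
        extendPerm (n + 1) (Equiv.swap l l')
          (faceMap K ρ (extendPerm (n + 1) (Equiv.swap l l') x)) := by
    intro x x' A B hA hx hB hBA
    exact hA.trans (((congrArg (⇑(extendPerm (n + 1) (Equiv.swap l l')))
      (congrArg (⇑(faceMap K ρ)) hx)).trans
        ((congrArg (⇑(extendPerm (n + 1) (Equiv.swap l l'))) hB).trans hBA)).symm)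
  rcases x with m | t
  · -- x = inl m
    by_cases hm : m.val = k
    · -- m corresponds to K / K'
      have hmK : m = (⟨k, by omega⟩ : Fin (n + 1)) := Fin.ext hm
      have hwa : (faceEquiv (n + 1) L K').symm (some (Sum.inl m)) = Sum.inl K := by
        rw [fe_symm_some_inl, hmK, hKA]
      have hwb : (faceEquiv (n + 1) L K).symm (some (Sum.inl m)) = Sum.inl K' := by
        rw [fe_symm_some_inl, hmK, hKA']
      refine glue _ (Sum.inl m) (Sum.inr l) (Sum.inr l') ?_ rfl ?_ ?_
      · exact faceMap_apply_some' K' ρ hwa h1 (fe_inr _ _)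
      · exact faceMap_apply_some' K ρ hwb h3 (fe_inr _ _)
      · exact congrArg Sum.inr (Equiv.swap_apply_right l l')
    · -- generic m
      have hsA : K'.succAbove m = K.succAbove m := by
        apply Fin.ext
        rw [succAbove_val, succAbove_val, hKval, hK'val]
        split_ifs <;> omega
      obtain ⟨M, hM⟩ : ∃ M, K.succAbove m = M := ⟨_, rfl⟩
      have hMval : M.val = if m.val < k then m.val else m.val + 1 := by
        rw [← hM, succAbove_val, hKval]
      have h5 : M.val ≠ k ∧ M.val ≠ k + 1 := by
        constructor <;> (rw [hMval]; split_ifs <;> omega)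
      have hMK : M ≠ K := fun h => h5.1 ((congrArg Fin.val h).trans hKval)
      have hMK' : M ≠ K' := fun h => h5.2 ((congrArg Fin.val h).trans hK'val)
      have hwa : (faceEquiv (n + 1) L K').symm (some (Sum.inl m)) = Sum.inl M := by
        rw [fe_symm_some_inl, hsA, hM]
      have hwb : (faceEquiv (n + 1) L K).symm (some (Sum.inl m)) = Sum.inl M := by
        rw [fe_symm_some_inl, hM]
      obtain ⟨c, hρM⟩ : ∃ c, ρ (Sum.inl M) = c := ⟨_, rfl⟩
      rcases c with m'' | s
      · -- ρ(inl M) = inl m''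
        have hm''K : m'' ≠ K := by
          intro h; rw [h, ← h2] at hρM
          exact absurd (ρ.injective hρM) (by simp)
        have hm''K' : m'' ≠ K' := by
          intro h; rw [h, ← h4] at hρM
          exact absurd (ρ.injective hρM) (by simp)
        have hm2 : ∃ m2 : Fin (n + 1), K.succAbove m2 = m'' ∧ K'.succAbove m2 = m'' := by
          have hne : m''.val ≠ k := fun hc => hm''K (Fin.ext hc)
          have hne' : m''.val ≠ k + 1 := fun hc => hm''K' (Fin.ext hc)
          rcases lt_or_ge m''.val k with h | h
          · refine ⟨⟨m''.val, by omega⟩, Fin.ext ?_, Fin.ext ?_⟩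
            · rw [mk_succAbove_val, hKval]; split_ifs <;> omega
            · rw [mk_succAbove_val, hK'val]; split_ifs <;> omega
          · have hgt : k + 1 < m''.val := by omega
            refine ⟨⟨m''.val - 1, by omega⟩, Fin.ext ?_, Fin.ext ?_⟩
            · rw [mk_succAbove_val, hKval]; split_ifs <;> omega
            · rw [mk_succAbove_val, hK'val]; split_ifs <;> omega
        obtain ⟨m2, hm2a, hm2b⟩ := hm2
        have hva : faceEquiv (n + 1) L K' (Sum.inl m'') = some (Sum.inl m2) :=
          fe_inl_of_succAbove K' m2 hm2b
        have hvb : faceEquiv (n + 1) L K (Sum.inl m'') = some (Sum.inl m2) :=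
          fe_inl_of_succAbove K m2 hm2a
        refine glue _ (Sum.inl m) (Sum.inl m2) (Sum.inl m2) ?_ rfl ?_ rfl
        · exact faceMap_apply_some' K' ρ hwa hρM hva
        · exact faceMap_apply_some' K ρ hwb hρM hvb
      · -- ρ(inl M) = inr s
        have hsl : s ≠ l := by
          intro h; rw [h, ← h1] at hρM
          exact hMK (Sum.inl.inj (ρ.injective hρM))
        have hsl' : s ≠ l' := by
          intro h; rw [h, ← h3] at hρM
          exact hMK' (Sum.inl.inj (ρ.injective hρM))
        refine glue _ (Sum.inl m) (Sum.inr s) (Sum.inr s) ?_ rfl ?_ ?_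
        · exact faceMap_apply_some' K' ρ hwa hρM (fe_inr _ _)
        · exact faceMap_apply_some' K ρ hwb hρM (fe_inr _ _)
        · exact congrArg Sum.inr (Equiv.swap_apply_of_ne_of_ne hsl hsl')
  · -- x = inr t
    by_cases htl' : t = l'
    · have hρa : ρ (Sum.inr t) = Sum.inl K' := by rw [htl']; exact h4
      have hx : extendPerm (n + 1) (Equiv.swap l l') (Sum.inr t) = Sum.inr l := by
        rw [htl']; exact congrArg Sum.inr (Equiv.swap_apply_right l l')
      refine glue _ (Sum.inr l) (Sum.inr l') (Sum.inr l) ?_ hx ?_ ?_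
      · exact faceMap_apply_none' K' ρ (fe_symm_some_inr _ _) hρa (fe_inl_self _) h3 (fe_inr _ _)
      · exact faceMap_apply_none' K ρ (fe_symm_some_inr _ _) h2 (fe_inl_self _) h1 (fe_inr _ _)
      · exact congrArg Sum.inr (Equiv.swap_apply_left l l')
    · by_cases htl : t = l
      · have hρa : ρ (Sum.inr t) = Sum.inl K := by rw [htl]; exact h2
        have hx : extendPerm (n + 1) (Equiv.swap l l') (Sum.inr t) = Sum.inr l' := by
          rw [htl]; exact congrArg Sum.inr (Equiv.swap_apply_left l l')
        have feK := fe_inl_of_succAbove (L := L) K' (⟨k, by omega⟩ : Fin (n + 1)) hKA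
        have feK' := fe_inl_of_succAbove (L := L) K (⟨k, by omega⟩ : Fin (n + 1)) hKA'
        refine glue _ (Sum.inr l') (Sum.inl (⟨k, by omega⟩ : Fin (n + 1)))
          (Sum.inl (⟨k, by omega⟩ : Fin (n + 1))) ?_ hx ?_ rfl
        · exact faceMap_apply_some' K' ρ (fe_symm_some_inr _ _) hρa feK
        · exact faceMap_apply_some' K ρ (fe_symm_some_inr _ _) h4 feK'
      · have hσt : extendPerm (n + 1) (Equiv.swap l l') (Sum.inr t) = Sum.inr t :=
          congrArg Sum.inr (Equiv.swap_apply_of_ne_of_ne htl htl')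
        obtain ⟨c, hρt⟩ : ∃ c, ρ (Sum.inr t) = c := ⟨_, rfl⟩
        rcases c with m'' | s
        · have hm''K : m'' ≠ K := by
            intro h; rw [h, ← h2] at hρt
            exact htl (Sum.inr.inj (ρ.injective hρt))
          have hm''K' : m'' ≠ K' := by
            intro h; rw [h, ← h4] at hρt
            exact htl' (Sum.inr.inj (ρ.injective hρt))
          have hm2 : ∃ m2 : Fin (n + 1), K.succAbove m2 = m'' ∧ K'.succAbove m2 = m'' := by
            have hne : m''.val ≠ k := fun hc => hm''K (Fin.ext hc)
            have hne' : m''.val ≠ k + 1 := fun hc => hm''K' (Fin.ext hc)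
            rcases lt_or_ge m''.val k with h | h
            · refine ⟨⟨m''.val, by omega⟩, Fin.ext ?_, Fin.ext ?_⟩
              · rw [mk_succAbove_val, hKval]; split_ifs <;> omega
              · rw [mk_succAbove_val, hK'val]; split_ifs <;> omega
            · have hgt : k + 1 < m''.val := by omega
              refine ⟨⟨m''.val - 1, by omega⟩, Fin.ext ?_, Fin.ext ?_⟩
              · rw [mk_succAbove_val, hKval]; split_ifs <;> omega
              · rw [mk_succAbove_val, hK'val]; split_ifs <;> omega
          obtain ⟨m2, hm2a, hm2b⟩ := hm2
          have hva : faceEquiv (n + 1) L K' (Sum.inl m'') = some (Sum.inl m2) :=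
            fe_inl_of_succAbove K' m2 hm2b
          have hvb : faceEquiv (n + 1) L K (Sum.inl m'') = some (Sum.inl m2) :=
            fe_inl_of_succAbove K m2 hm2a
          refine glue _ (Sum.inr t) (Sum.inl m2) (Sum.inl m2) ?_ hσt ?_ rfl
          · exact faceMap_apply_some' K' ρ (fe_symm_some_inr _ _) hρt hva
          · exact faceMap_apply_some' K ρ (fe_symm_some_inr _ _) hρt hvb
        · have hsl : s ≠ l := by
            intro h; rw [h, ← h1] at hρt
            exact absurd (ρ.injective hρt) (by simp)
          have hsl' : s ≠ l' := by
            intro h; rw [h, ← h3] at hρt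
            exact absurd (ρ.injective hρt) (by simp)
          refine glue _ (Sum.inr t) (Sum.inr s) (Sum.inr s) ?_ hσt ?_ ?_
          · exact faceMap_apply_some' K' ρ (fe_symm_some_inr _ _) hρt (fe_inr _ _)
          · exact faceMap_apply_some' K ρ (fe_symm_some_inr _ _) hρt (fe_inr _ _)
          · exact congrArg Sum.inr (Equiv.swap_apply_of_ne_of_ne hsl hsl')

end step

/-- For `n ≥ 1` (here `[n]` is realized as `Fin (n+2)` with `n ↦ n+1`),
a finite set `L`, a permutation `ρ` of `[n] ∪ L`, and `0 ≤ i ≤ j ≤ n` such that for every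
`k ∈ {i, …, j}` one has `ρ(k) ∈ L` and `ρ(ρ(k)) = k`, all the faces `D_i(ρ), …, D_j(ρ)`
agree in the set `Tymm([n-1] ∪ L)` of `Symm(L)`-conjugacy orbits, i.e. each `D_k(ρ)` is
conjugate to `D_i(ρ)` by a permutation of `L` extended by the identity. -/
theorem stmt_5 {L : Type} [Finite L] (n : ℕ) (ρ : Equiv.Perm (Fin (n + 2) ⊕ L))
    (i j : ℕ) (hij : i ≤ j) (hj : j ≤ n + 1)
    (hleaf : ∀ (k : ℕ) (hik : i ≤ k) (hkj : k ≤ j),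
      (∃ l : L, ρ (Sum.inl (⟨k, by omega⟩ : Fin (n + 2))) = Sum.inr l) ∧
        ρ (ρ (Sum.inl (⟨k, by omega⟩ : Fin (n + 2)))) =
          Sum.inl (⟨k, by omega⟩ : Fin (n + 2))) :
    ∀ (k : ℕ) (hik : i ≤ k) (hkj : k ≤ j),
      ∃ σ : Equiv.Perm L,
        faceMap (⟨k, by omega⟩ : Fin (n + 2)) ρ =
          (extendPerm (n + 1) σ)⁻¹ * faceMap (⟨i, by omega⟩ : Fin (n + 2)) ρ *
            extendPerm (n + 1) σ := by
  classical
  intro k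
  induction k with
  | zero =>
    intro hik hkj
    have hi0 : i = 0 := Nat.le_zero.mp hik
    subst hi0
    refine ⟨1, ?_⟩
    rw [extendPerm_one]
    simp only [inv_one, one_mul, mul_one]
  | succ k ih =>
    intro hik hkj
    by_cases hki : i = k + 1
    · subst hki
      refine ⟨1, ?_⟩
      rw [extendPerm_one]
      simp only [inv_one, one_mul, mul_one]
    · have hik' : i ≤ k := by omega
      have hkj' : k ≤ j := by omega
      obtain ⟨σ, hσ⟩ := ih hik' hkj'
      obtain ⟨⟨l, h1⟩, h2⟩ := hleaf k hik' hkj'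
      obtain ⟨⟨l', h3⟩, h4⟩ := hleaf (k + 1) (by omega) hkj
      rw [h1] at h2
      rw [h3] at h4
      have hstep := step ρ k (by omega) l l' h1 h2 h3 h4
      refine ⟨σ * Equiv.swap l l', ?_⟩
      rw [hstep, hσ, extendPerm_mul, mul_inv_rev]
      group
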